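/- Let r > 1 be a real number, let η_N := 2^{−8r}, and let η_M := H₂(η_N)/(H₂(η_N) + 2). Then 2r·η_N ≤ H₂(η_N)/4 ≤ η_M ≤ H₂(η_N)/2 < −η_N·log₂(η_N) < 2^{−4r} < 0.1. In particular, 0 < η_N < η_M < 0.1 and η_M ≥ 2r·η_N. -/

import Mathlib

open scoped ENNReal

/-- The binary entropy function `H₂(x) = −x·log₂ x − (1−x)·log₂(1−x)`. -/
noncomputable def H2 (x : ℝ) : ℝ :=
  -x * Real.logb 2 x - (1 - x) * Real.logb 2 (1 - x)

lemma aux_T_bounds (x : ℝ) (h0 : 0 < x) (h1 : x < 1) :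
    0 ≤ -((1 - x) * Real.logb 2 (1 - x)) ∧
      -((1 - x) * Real.logb 2 (1 - x)) ≤ 2 * x := by
  have h1x : (0 : ℝ) < 1 - x := by linarith
  have hlb : Real.logb 2 (1 - x) < 0 := Real.logb_neg (by norm_num) h1x (by linarith)
  have hln2 : (0.6931471803 : ℝ) < Real.log 2 := Real.log_two_gt_d9
  constructor
  · nlinarith
  · have hlog : Real.log ((1 - x)⁻¹) ≤ (1 - x)⁻¹ - 1 :=
      Real.log_le_sub_one_of_pos (by positivity)
    rw [Real.log_inv] at hlog
    -- -log(1-x) ≤ (1-x)⁻¹ - 1 = x/(1-x)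
    have hinv : (1 - x)⁻¹ - 1 = x / (1 - x) := by field_simp; ring
    rw [hinv] at hlog
    have hkey : -( (1 - x) * Real.log (1 - x)) ≤ x := by
      have := mul_le_mul_of_nonneg_left hlog (le_of_lt h1x)
      calc -((1 - x) * Real.log (1 - x)) = (1 - x) * (-Real.log (1 - x)) := by ring
        _ ≤ (1 - x) * (x / (1 - x)) := this
        _ = x := by field_simp
    have hl2 : (0:ℝ) < Real.log 2 := by linarith
    rw [Real.logb, show -((1 - x) * (Real.log (1 - x) / Real.log 2))
        = (-((1 - x) * Real.log (1 - x))) / Real.log 2 by ring, div_le_iff₀ hl2]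
    nlinarith

lemma aux_rpow_lb (r : ℝ) (hr : 1 < r) : 8 * r < (2 : ℝ) ^ (4 * r) := by
  have h2 : (0 : ℝ) < 2 := by norm_num
  have hsplit : (2 : ℝ) ^ (4 * r) = 16 * (2 : ℝ) ^ (4 * r - 4) := by
    have : (2 : ℝ) ^ ((4 : ℝ) + (4 * r - 4)) = (2:ℝ) ^ (4:ℝ) * (2:ℝ) ^ (4 * r - 4) :=
      Real.rpow_add h2 _ _
    have h4 : (2 : ℝ) ^ (4 : ℝ) = 16 := by
      rw [show (4 : ℝ) = ((4 : ℕ) : ℝ) by norm_num, Real.rpow_natCast]; norm_num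
    rw [h4] at this
    rw [← this]; ring_nf
  have hexp : (2 : ℝ) ^ (4 * r - 4) = Real.exp (Real.log 2 * (4 * r - 4)) :=
    Real.rpow_def_of_pos h2 _
  have hle : Real.log 2 * (4 * r - 4) + 1 ≤ Real.exp (Real.log 2 * (4 * r - 4)) :=
    Real.add_one_le_exp _
  have hln2 : (0.6931471803 : ℝ) < Real.log 2 := Real.log_two_gt_d9
  rw [hsplit, hexp]
  nlinarith

/-- For `r > 1`, `η_N := 2^{−8r}` and
`η_M := H₂(η_N)/(H₂(η_N)+2)` we have the chain of inequalities
`2r·η_N ≤ H₂(η_N)/4 ≤ η_M ≤ H₂(η_N)/2 < −η_N·log₂ η_N < 2^{−4r} < 0.1`; in particular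
`0 < η_N < η_M < 0.1` and `η_M ≥ 2r·η_N`. -/
theorem noise_rate_parameters
    (r ηN ηM : ℝ) (hr : 1 < r)
    (hηN : ηN = (2 : ℝ) ^ (-(8 * r)))
    (hηM : ηM = H2 ηN / (H2 ηN + 2)) :
    (2 * r * ηN ≤ H2 ηN / 4 ∧ H2 ηN / 4 ≤ ηM ∧ ηM ≤ H2 ηN / 2 ∧
      H2 ηN / 2 < -ηN * Real.logb 2 ηN ∧
      -ηN * Real.logb 2 ηN < (2 : ℝ) ^ (-(4 * r)) ∧ (2 : ℝ) ^ (-(4 * r)) < 0.1) ∧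
    (0 < ηN ∧ ηN < ηM ∧ ηM < 0.1 ∧ 2 * r * ηN ≤ ηM) := by
  have h2 : (0 : ℝ) < 2 := by norm_num
  have hN0 : 0 < ηN := by rw [hηN]; positivity
  have hN1 : ηN < 1 := by
    rw [hηN]
    calc (2 : ℝ) ^ (-(8 * r)) < (2 : ℝ) ^ (0 : ℝ) := by
          rw [Real.rpow_lt_rpow_left_iff (by norm_num : (1:ℝ) < 2)]; linarith
      _ = 1 := Real.rpow_zero 2
  have hlogb : Real.logb 2 ηN = -(8 * r) := by
    rw [hηN]; exact Real.logb_rpow h2 (by norm_num)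
  -- the main term
  have hmain : -ηN * Real.logb 2 ηN = 8 * r * ηN := by rw [hlogb]; ring
  obtain ⟨hT0, hT2⟩ := aux_T_bounds ηN hN0 hN1
  have hH2eq : H2 ηN = 8 * r * ηN + -((1 - ηN) * Real.logb 2 (1 - ηN)) := by
    rw [H2, hlogb]; ring
  have hHlb : 8 * r * ηN ≤ H2 ηN := by rw [hH2eq]; linarith
  have hHub : H2 ηN ≤ 8 * r * ηN + 2 * ηN := by rw [hH2eq]; linarith
  have hHpos : 0 < H2 ηN := by nlinarith
  -- H2 ηN ≤ 2 : since (8r+2) ηN ≤ 2, using ηN = 2^{-8r} ≤ 2^{-4r} and 8r < 2^{4r}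
  have hrlb := aux_rpow_lb r hr
  have hsplitN : ηN = (2 : ℝ) ^ (-(4 * r)) * (2 : ℝ) ^ (-(4 * r)) := by
    rw [hηN, ← Real.rpow_add h2]; ring_nf
  have h4pos : (0 : ℝ) < (2 : ℝ) ^ (-(4 * r)) := by positivity
  have hinv : (2 : ℝ) ^ (-(4 * r)) = ((2 : ℝ) ^ (4 * r))⁻¹ := by
    rw [← Real.rpow_neg (le_of_lt h2)]
  have h4r1 : (2 : ℝ) ^ (-(4 * r)) < 1 / 16 := by
    calc (2 : ℝ) ^ (-(4 * r)) < (2 : ℝ) ^ (-(4 : ℝ)) := by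
          rw [Real.rpow_lt_rpow_left_iff (by norm_num : (1:ℝ) < 2)]; linarith
      _ = 1 / 16 := by
          rw [Real.rpow_neg (le_of_lt h2), show (4 : ℝ) = ((4 : ℕ) : ℝ) by norm_num,
            Real.rpow_natCast]; norm_num
  -- key : 8 r ηN < 2^{-4r}
  have hkey : 8 * r * ηN < (2 : ℝ) ^ (-(4 * r)) := by
    rw [hsplitN]
    have h8 : 8 * r * (2 : ℝ) ^ (-(4 * r)) < 1 := by
      rw [hinv]
      rw [mul_inv_lt_iff₀ (by positivity)]
      linarith
    nlinarith
  have hH2le2 : H2 ηN ≤ 2 := by nlinarith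
  have hD : H2 ηN / 2 < 8 * r * ηN := by nlinarith
  have hB : H2 ηN / 4 ≤ ηM := by
    rw [hηM, div_le_div_iff₀ (by norm_num) (by linarith)]
    nlinarith
  have hC : ηM ≤ H2 ηN / 2 := by
    rw [hηM, div_le_div_iff₀ (by linarith) (by norm_num)]
    nlinarith
  have hA : 2 * r * ηN ≤ H2 ηN / 4 := by linarith
  have hF : (2 : ℝ) ^ (-(4 * r)) < 0.1 := by
    calc (2 : ℝ) ^ (-(4 * r)) < 1 / 16 := h4r1
      _ < 0.1 := by norm_num
  refine ⟨⟨hA, hB, hC, by rw [hmain]; exact hD, by rw [hmain]; exact hkey, hF⟩,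
    hN0, ?_, ?_, le_trans hA hB⟩
  · nlinarith
  · calc ηM ≤ H2 ηN / 2 := hC
      _ < 8 * r * ηN := hD
      _ < (2 : ℝ) ^ (-(4 * r)) := hkey
      _ < 0.1 := hF
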